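/- Let T₂ be the diagonal torus of SL₂(k) acting on SL₂(k) on both sides: (s,t)·X = sXt⁻¹. Then the algebra of invariant regular functions on SL₂ is a polynomial algebra in one variable, generated by the product X₁₁X₂₂ of the diagonal entries (equivalently X₁₂X₂₁ = X₁₁X₂₂ − 1), so the double coset variety T₂∖SL₂/T₂ is the affine line 𝔸¹. -/

import Mathlib

variable (k : Type) [Field k] [CharZero k] [IsAlgClosed k]

/-- A matrix in `SL₂` is diagonal (the diagonal torus `T₂ = {diag(t, t⁻¹)}`). -/
def IsDiag (t : Matrix.SpecialLinearGroup (Fin 2) k) : Prop :=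
  ∀ i j : Fin 2, i ≠ j → t.1 i j = 0

/-- Regular functions on `SL₂`: the subalgebra of functions generated by the matrix
coordinates. -/
def regularSL2 : Subalgebra k (Matrix.SpecialLinearGroup (Fin 2) k → k) :=
  Algebra.adjoin k (Set.range fun p : Fin 2 × Fin 2 =>
    fun X : Matrix.SpecialLinearGroup (Fin 2) k => X.1 p.1 p.2)

/-- Functions invariant under the two-sided torus action `(s,t)·X = sXt⁻¹`. -/
def invSL2 : Subalgebra k (Matrix.SpecialLinearGroup (Fin 2) k → k) where
  carrier := {φ | ∀ s t : Matrix.SpecialLinearGroup (Fin 2) k, IsDiag k s → IsDiag k t →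
    ∀ X, φ (s * X * t⁻¹) = φ X}
  mul_mem' := by
    intro a b ha hb s t hs ht X
    simp [Pi.mul_apply, ha s t hs ht X, hb s t hs ht X]
  add_mem' := by
    intro a b ha hb s t hs ht X
    simp [Pi.add_apply, ha s t hs ht X, hb s t hs ht X]
  algebraMap_mem' := by intro c s t hs ht X; rfl

open Matrix Polynomial

/-- slice matrix -/
def Mslice (α : k) : Matrix.SpecialLinearGroup (Fin 2) k :=
  ⟨!![α, 1; α - 1, 1], by rw [Matrix.det_fin_two_of]; ring⟩

/-- curve matrix -/
def Pmat (μ : k) : Matrix.SpecialLinearGroup (Fin 2) k :=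
  ⟨!![1, μ; μ, 1 + μ ^ 2], by rw [Matrix.det_fin_two_of]; ring⟩

lemma Pmat_zero : Pmat k 0 = 1 := by
  apply Subtype.ext
  show !![(1:k), 0; 0, 1 + 0 ^ 2] = (1 : Matrix (Fin 2) (Fin 2) k)
  ext i j
  fin_cases i <;> fin_cases j <;> simp [Matrix.one_apply] <;> norm_num

lemma entry_mul_Pmat (X : Matrix.SpecialLinearGroup (Fin 2) k) (μ : k) (i j : Fin 2) :
    (X * Pmat k μ).1 i j = X.1 i 0 * (Pmat k μ).1 0 j + X.1 i 1 * (Pmat k μ).1 1 j := by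
  show (X.1 * (Pmat k μ).1) i j = _
  rw [Matrix.mul_apply, Fin.sum_univ_two]

/-- auxiliary subalgebra: functions that are polynomial along the curve and the slice -/
def polyAlong : Subalgebra k (Matrix.SpecialLinearGroup (Fin 2) k → k) where
  carrier := {φ | (∀ X₀, ∃ p : Polynomial k, ∀ μ, φ (X₀ * Pmat k μ) = p.eval μ) ∧
    (∃ q : Polynomial k, ∀ α, φ (Mslice k α) = q.eval α)}
  mul_mem' := by
    rintro a b ⟨ha1, qa, ha2⟩ ⟨hb1, qb, hb2⟩
    refine ⟨fun X₀ => ?_, qa * qb, fun α => by simp [Pi.mul_apply, ha2, hb2]⟩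
    obtain ⟨p, hp⟩ := ha1 X₀; obtain ⟨p', hp'⟩ := hb1 X₀
    exact ⟨p * p', fun μ => by simp [Pi.mul_apply, hp, hp']⟩
  add_mem' := by
    rintro a b ⟨ha1, qa, ha2⟩ ⟨hb1, qb, hb2⟩
    refine ⟨fun X₀ => ?_, qa + qb, fun α => by simp [Pi.add_apply, ha2, hb2]⟩
    obtain ⟨p, hp⟩ := ha1 X₀; obtain ⟨p', hp'⟩ := hb1 X₀
    exact ⟨p + p', fun μ => by simp [Pi.add_apply, hp, hp']⟩
  algebraMap_mem' := fun c =>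
    ⟨fun _ => ⟨Polynomial.C c, fun μ => by simp⟩, Polynomial.C c, fun α => by simp⟩

lemma regular_le_polyAlong : regularSL2 k ≤ polyAlong k := by
  apply Algebra.adjoin_le
  rintro _ ⟨⟨i, j⟩, rfl⟩
  constructor
  · intro X₀
    fin_cases i <;> fin_cases j
    · exact ⟨C (X₀.1 0 0) + C (X₀.1 0 1) * X, fun μ => by
        show (X₀ * Pmat k μ).1 0 0 = _; rw [entry_mul_Pmat]; simp [Pmat]⟩
    · exact ⟨C (X₀.1 0 0) * X + C (X₀.1 0 1) * (1 + X ^ 2), fun μ => by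
        show (X₀ * Pmat k μ).1 0 1 = _; rw [entry_mul_Pmat]; simp [Pmat]⟩
    · exact ⟨C (X₀.1 1 0) + C (X₀.1 1 1) * X, fun μ => by
        show (X₀ * Pmat k μ).1 1 0 = _; rw [entry_mul_Pmat]; simp [Pmat]⟩
    · exact ⟨C (X₀.1 1 0) * X + C (X₀.1 1 1) * (1 + X ^ 2), fun μ => by
        show (X₀ * Pmat k μ).1 1 1 = _; rw [entry_mul_Pmat]; simp [Pmat]⟩
  · fin_cases i <;> fin_cases j
    · exact ⟨X, fun α => by simp [Mslice]⟩
    · exact ⟨1, fun α => by simp [Mslice]⟩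
    · exact ⟨X - 1, fun α => by simp [Mslice]⟩
    · exact ⟨1, fun α => by simp [Mslice]⟩

/-- On the open stratum, any invariant function equals its slice value. -/
lemma step1 {φ : Matrix.SpecialLinearGroup (Fin 2) k → k} (hinv : φ ∈ invSL2 k)
    {q : Polynomial k} (hq : ∀ α, φ (Mslice k α) = q.eval α)
    (X : Matrix.SpecialLinearGroup (Fin 2) k)
    (hb : X.1 0 1 ≠ 0) (hc : X.1 1 0 ≠ 0) (hd : X.1 1 1 ≠ 0) :
    φ X = q.eval (X.1 0 0 * X.1 1 1) := by
  have hdet : X.1 0 0 * X.1 1 1 - X.1 0 1 * X.1 1 0 = 1 := by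
    have h2 := X.2
    rwa [Matrix.det_fin_two] at h2
  obtain ⟨ν, hν⟩ := IsAlgClosed.exists_pow_nat_eq (X.1 0 1 * X.1 1 1) (n := 2) two_pos
  have hν0 : ν ≠ 0 := by
    intro h
    exact mul_ne_zero hb hd (by rw [← hν, h]; ring)
  have hl0 : ν / X.1 0 1 ≠ 0 := div_ne_zero hν0 hb
  set l := ν / X.1 0 1 with hl
  let s : Matrix.SpecialLinearGroup (Fin 2) k :=
    ⟨!![l, 0; 0, l⁻¹], by rw [Matrix.det_fin_two_of]; field_simp; norm_num⟩
  let t : Matrix.SpecialLinearGroup (Fin 2) k :=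
    ⟨!![ν⁻¹, 0; 0, ν], by rw [Matrix.det_fin_two_of]; field_simp; norm_num⟩
  have hs : IsDiag k s := by
    intro i j hij; fin_cases i <;> fin_cases j <;> simp_all [s]
  have ht : IsDiag k t := by
    intro i j hij; fin_cases i <;> fin_cases j <;> simp_all [t]
  have hti : (t⁻¹).1 = !![ν, 0; 0, ν⁻¹] := by
    rw [Matrix.SpecialLinearGroup.coe_inv]
    show Matrix.adjugate !![ν⁻¹, 0; 0, ν] = _
    rw [Matrix.adjugate_fin_two_of]
    norm_num
  have key : s * X * t⁻¹ = Mslice k (X.1 0 0 * X.1 1 1) := by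
    apply Subtype.ext
    show s.1 * X.1 * (t⁻¹).1 = _
    rw [hti]
    rw [Matrix.eta_fin_two X.1]
    show !![l, 0; 0, l⁻¹] * _ * _ = _
    rw [Matrix.mul_fin_two, Matrix.mul_fin_two]
    show _ = !![_, 1; _ - 1, 1]
    ext i j
    fin_cases i <;> fin_cases j
    · simp only [hl, Fin.zero_eta, Fin.mk_one, Matrix.of_apply, Matrix.cons_val', Matrix.cons_val_zero,
        Matrix.cons_val_one, Matrix.empty_val', Matrix.cons_val_fin_one]
      field_simp
      linear_combination X.1 0 0 * hν
    · simp only [hl, Fin.zero_eta, Fin.mk_one, Matrix.of_apply, Matrix.cons_val', Matrix.cons_val_zero,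
        Matrix.cons_val_one, Matrix.empty_val', Matrix.cons_val_fin_one]
      field_simp
      ring
    · simp only [hl, Fin.zero_eta, Fin.mk_one, Matrix.of_apply, Matrix.cons_val', Matrix.cons_val_zero,
        Matrix.cons_val_one, Matrix.empty_val', Matrix.cons_val_fin_one]
      field_simp
      linear_combination -ν * hdet
    · simp only [hl, Fin.zero_eta, Fin.mk_one, Matrix.of_apply, Matrix.cons_val', Matrix.cons_val_zero,
        Matrix.cons_val_one, Matrix.empty_val', Matrix.cons_val_fin_one]
      field_simp
      linear_combination -hν
  calc φ X = φ (s * X * t⁻¹) := (hinv s t hs ht X).symm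
    _ = q.eval (X.1 0 0 * X.1 1 1) := by rw [key]; exact hq _

/-- Every invariant function that is "polynomial along the curve" agrees with its slice
polynomial everywhere. -/
lemma step2 {φ : Matrix.SpecialLinearGroup (Fin 2) k → k} (hinv : φ ∈ invSL2 k)
    {q : Polynomial k} (hq : ∀ α, φ (Mslice k α) = q.eval α)
    {p : Polynomial k} (X₀ : Matrix.SpecialLinearGroup (Fin 2) k)
    (hp : ∀ μ, φ (X₀ * Pmat k μ) = p.eval μ) :
    φ X₀ = q.eval (X₀.1 0 0 * X₀.1 1 1) := by
  set a := X₀.1 0 0 with ha'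
  set b := X₀.1 0 1 with hb'
  set c := X₀.1 1 0 with hc'
  set d := X₀.1 1 1 with hd'
  have hdet0 : a * d - b * c = 1 := by
    have h2 := X₀.2
    rwa [Matrix.det_fin_two] at h2
  set e00 : Polynomial k := C a + C b * X with he00'
  set e01 : Polynomial k := C b + C a * X + C b * X ^ 2 with he01'
  set e10 : Polynomial k := C c + C d * X with he10'
  set e11 : Polynomial k := C d + C c * X + C d * X ^ 2 with he11'
  have h00 : ∀ μ, (X₀ * Pmat k μ).1 0 0 = e00.eval μ := fun μ => by
    rw [entry_mul_Pmat]; simp [Pmat, he00']; rfl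
  have h01 : ∀ μ, (X₀ * Pmat k μ).1 0 1 = e01.eval μ := fun μ => by
    rw [entry_mul_Pmat]; simp [Pmat, he01']; ring
  have h10 : ∀ μ, (X₀ * Pmat k μ).1 1 0 = e10.eval μ := fun μ => by
    rw [entry_mul_Pmat]; simp [Pmat, he10']; rfl
  have h11 : ∀ μ, (X₀ * Pmat k μ).1 1 1 = e11.eval μ := fun μ => by
    rw [entry_mul_Pmat]; simp [Pmat, he11']; ring
  have hne01 : e01 ≠ 0 := by
    intro h
    have h0 : b = 0 := by simpa [he01'] using congrArg (Polynomial.eval 0) h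
    have h1 : a = 0 := by simpa [he01', h0] using congrArg (Polynomial.eval 1) h
    rw [h0, h1] at hdet0; norm_num at hdet0
  have hne10 : e10 ≠ 0 := by
    intro h
    have h0 : c = 0 := by simpa [he10'] using congrArg (Polynomial.eval 0) h
    have h1 : d = 0 := by simpa [he10', h0] using congrArg (Polynomial.eval 1) h
    rw [h0, h1] at hdet0; norm_num at hdet0
  have hne11 : e11 ≠ 0 := by
    intro h
    have h0 : d = 0 := by simpa [he11'] using congrArg (Polynomial.eval 0) h
    have h1 : c = 0 := by simpa [he11', h0] using congrArg (Polynomial.eval 1) h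
    rw [h0, h1] at hdet0; norm_num at hdet0
  set G : Polynomial k := p - q.comp (e00 * e11) with hG'
  have hG : ∀ μ : k, ((e01 * e10 * e11) * G).eval μ = 0 := by
    intro μ
    rcases eq_or_ne (e01.eval μ) 0 with h1 | h1
    · simp [h1]
    rcases eq_or_ne (e10.eval μ) 0 with h2 | h2
    · simp [h2]
    rcases eq_or_ne (e11.eval μ) 0 with h3 | h3
    · simp [h3]
    have hstep := step1 k hinv hq (X₀ * Pmat k μ)
      (by rw [h01 μ]; exact h1) (by rw [h10 μ]; exact h2) (by rw [h11 μ]; exact h3)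
    rw [hp μ, h00 μ, h11 μ] at hstep
    simp only [hG', Polynomial.eval_mul, Polynomial.eval_sub, Polynomial.eval_comp]
    rw [hstep]
    ring
  have hGzero : (e01 * e10 * e11) * G = 0 := by
    apply Polynomial.funext
    intro r
    rw [hG r, Polynomial.eval_zero]
  have hG0 : G = 0 := by
    rcases mul_eq_zero.mp hGzero with h | h
    · exact absurd h (mul_ne_zero (mul_ne_zero hne01 hne10) hne11)
    · exact h
  have hpq : p.eval 0 = q.eval (a * d) := by
    have := congrArg (Polynomial.eval 0) hG0
    simp only [hG', Polynomial.eval_sub, Polynomial.eval_comp, Polynomial.eval_mul,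
      Polynomial.eval_zero, sub_eq_zero, he00', he11'] at this
    simpa using this
  have hX0 : φ X₀ = p.eval 0 := by
    rw [← hp 0, Pmat_zero, mul_one]
  rw [hX0, hpq]

lemma inv_coe (t : Matrix.SpecialLinearGroup (Fin 2) k) :
    (t⁻¹).1 = !![t.1 1 1, -(t.1 0 1); -(t.1 1 0), t.1 0 0] := by
  conv_lhs => rw [Matrix.SpecialLinearGroup.coe_inv, Matrix.eta_fin_two t.1,
    Matrix.adjugate_fin_two_of]

lemma diag_det {s : Matrix.SpecialLinearGroup (Fin 2) k} (hs : IsDiag k s) :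
    s.1 0 0 * s.1 1 1 = 1 := by
  have h2 := s.2
  rw [Matrix.det_fin_two, hs 0 1 (by decide)] at h2
  linear_combination h2

/-- the algebra of regular functions on `SL₂` invariant under the
two-sided action `(s,t)·X = sXt⁻¹` of the diagonal torus `T₂` is a polynomial algebra in
one variable, generated by the product `X₁₁X₂₂` of the diagonal entries; so
`T₂∖SL₂/T₂ = 𝔸¹`. -/
theorem stmt18 :
    let f : Matrix.SpecialLinearGroup (Fin 2) k → k := fun X => X.1 0 0 * X.1 1 1
    (regularSL2 k ⊓ invSL2 k : Subalgebra k (Matrix.SpecialLinearGroup (Fin 2) k → k))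
      = Algebra.adjoin k {f} ∧
    Transcendental k f := by
  intro f
  have hf_eq : f = ((fun X : Matrix.SpecialLinearGroup (Fin 2) k => X.1 0 0) *
      fun X : Matrix.SpecialLinearGroup (Fin 2) k => X.1 1 1) := rfl
  have hf_reg : f ∈ regularSL2 k := by
    rw [hf_eq]
    exact mul_mem (Algebra.subset_adjoin ⟨(0, 0), rfl⟩) (Algebra.subset_adjoin ⟨(1, 1), rfl⟩)
  have hf_inv : f ∈ invSL2 k := by
    intro s t hs ht X
    show (s * X * t⁻¹).1 0 0 * (s * X * t⁻¹).1 1 1 = X.1 0 0 * X.1 1 1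
    have hs01 : s.1 0 1 = 0 := hs 0 1 (by decide)
    have hs10 : s.1 1 0 = 0 := hs 1 0 (by decide)
    have hu01 : (t⁻¹).1 0 1 = 0 := by rw [inv_coe]; simp [ht 0 1 (by decide)]
    have hu10 : (t⁻¹).1 1 0 = 0 := by rw [inv_coe]; simp [ht 1 0 (by decide)]
    have hu : (t⁻¹).1 0 0 * (t⁻¹).1 1 1 = 1 := by
      rw [inv_coe]
      show t.1 1 1 * t.1 0 0 = 1
      linear_combination diag_det k ht
    have hs' := diag_det k hs
    have hc : (s * X * t⁻¹).1 = s.1 * X.1 * (t⁻¹).1 := rfl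
    rw [hc]
    simp only [Matrix.mul_apply, Fin.sum_univ_two, hs01, hs10, hu01, hu10, zero_mul,
      mul_zero, add_zero, zero_add]
    linear_combination X.1 0 0 * X.1 1 1 * (t⁻¹).1 0 0 * (t⁻¹).1 1 1 * hs' +
      X.1 0 0 * X.1 1 1 * hu
  constructor
  · apply le_antisymm
    · rintro φ ⟨hreg, hinv⟩
      obtain ⟨hP, q, hq⟩ := regular_le_polyAlong k hreg
      have hkey : ∀ X, φ X = q.eval (f X) := by
        intro X₀
        obtain ⟨p, hp⟩ := hP X₀
        exact step2 k hinv hq X₀ hp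
      rw [Algebra.adjoin_singleton_eq_range_aeval]
      refine ⟨q, ?_⟩
      funext X
      rw [hkey X]
      calc (Polynomial.aeval f q) X = Polynomial.aeval (f X) q :=
            (Polynomial.aeval_algHom_apply (Pi.evalAlgHom k (fun _ => k) X) f q).symm
        _ = q.eval (f X) := by rw [Polynomial.coe_aeval_eq_eval]
      -- note the goal is `(aeval f q) X = eval (f X) q` after rw; fix direction below if needed
    · apply Algebra.adjoin_le
      intro g hg
      rw [Set.mem_singleton_iff] at hg
      subst hg
      exact ⟨hf_reg, hf_inv⟩
  · rintro ⟨p, hp0, hp⟩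
    apply hp0
    refine Polynomial.funext (q := 0) fun r => ?_
    have h1 : (Polynomial.aeval f p) (Mslice k r) = 0 := by rw [hp]; rfl
    have h2 : Polynomial.aeval (f (Mslice k r)) p = 0 :=
      (Polynomial.aeval_algHom_apply (Pi.evalAlgHom k (fun _ => k) (Mslice k r)) f p).trans h1
    have hfr : f (Mslice k r) = r := by
      show (Mslice k r).1 0 0 * (Mslice k r).1 1 1 = r
      simp [Mslice]
    rw [hfr] at h2
    rw [Polynomial.eval_zero, ← Polynomial.coe_aeval_eq_eval]
    exact h2
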